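/- arXiv:1305.4288 — 7 statements merged into one kernel-verified Lean document; each statement's English description precedes it below -/
import Mathlib

section
/- If φ is a first-order formula in negation normal form, M is a first-order model, and X is a team over M, then M satisfies φ under team semantics with team X if and only if every assignment s in X satisfies φ under Tarski semantics (the flatness property of first-order formulas). -/
/-- Formulas of first-order logic with team semantics, in negation normal form,
over a relational signature `σ` (with arities `ar`) extended with dependency
atoms indexed by `δ` (with arities `dar`).  Equality and inequality literals
are between tuples of variables; variables are natural numbers. -/
inductive TForm (σ : Type) (ar : σ → ℕ) (δ : Type) (dar : δ → ℕ) : Type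
  | rel (r : σ) (ts : Fin (ar r) → ℕ)
  | nrel (r : σ) (ts : Fin (ar r) → ℕ)
  | eq (k : ℕ) (x y : Fin k → ℕ)
  | neq (k : ℕ) (x y : Fin k → ℕ)
  | dep (d : δ) (xs : Fin (dar d) → ℕ)
  | and (φ ψ : TForm σ ar δ dar)
  | or (φ ψ : TForm σ ar δ dar)
  | ex (v : ℕ) (φ : TForm σ ar δ dar)
  | all (v : ℕ) (φ : TForm σ ar δ dar)

/-- A team over a model with carrier `M`: a set of assignments. -/
abbrev Team (M : Type) := Set (ℕ → M)

/-- `X(x̄)`: the relation of values of the tuple `x̄` in the team `X`. -/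
def Team.rel {M : Type} (X : Team M) {k : ℕ} (xs : Fin k → ℕ) : Set (Fin k → M) :=
  {t | ∃ s ∈ X, t = fun i => s (xs i)}

/-- An interpretation of a family of dependencies: for each index, an
isomorphism-invariant-style class of pairs (carrier, relation). -/
abbrev DepFam (δ : Type) (dar : δ → ℕ) := ∀ d : δ, ∀ M : Type, Set (Fin (dar d) → M) → Prop

/-- Lax team semantics. -/
def tsat {σ : Type} {ar : σ → ℕ} {δ : Type} {dar : δ → ℕ} {M : Type}
    (RI : ∀ r : σ, Set (Fin (ar r) → M)) (DI : DepFam δ dar) :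
    TForm σ ar δ dar → Team M → Prop
  | .rel r ts, X => ∀ s ∈ X, (fun i => s (ts i)) ∈ RI r
  | .nrel r ts, X => ∀ s ∈ X, (fun i => s (ts i)) ∉ RI r
  | .eq _ x y, X => ∀ s ∈ X, (fun i => s (x i)) = fun i => s (y i)
  | .neq _ x y, X => ∀ s ∈ X, (fun i => s (x i)) ≠ fun i => s (y i)
  | .dep d xs, X => DI d M (X.rel xs)
  | .and φ ψ, X => tsat RI DI φ X ∧ tsat RI DI ψ X
  | .or φ ψ, X => ∃ Y Z, X = Y ∪ Z ∧ tsat RI DI φ Y ∧ tsat RI DI ψ Z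
  | .ex v φ, X => ∃ H : (ℕ → M) → Set M, (∀ s ∈ X, (H s).Nonempty) ∧
      tsat RI DI φ {s' | ∃ s ∈ X, ∃ m ∈ H s, s' = Function.update s v m}
  | .all v φ, X => tsat RI DI φ {s' | ∃ s ∈ X, ∃ m : M, s' = Function.update s v m}

/-- Tarski (single-assignment) semantics; dependency atoms are treated as
trivially true (they are only meaningful for first-order formulas). -/
def ssat {σ : Type} {ar : σ → ℕ} {δ : Type} {dar : δ → ℕ} {M : Type}
    (RI : ∀ r : σ, Set (Fin (ar r) → M)) :
    TForm σ ar δ dar → (ℕ → M) → Prop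
  | .rel r ts, s => (fun i => s (ts i)) ∈ RI r
  | .nrel r ts, s => (fun i => s (ts i)) ∉ RI r
  | .eq _ x y, s => (fun i => s (x i)) = fun i => s (y i)
  | .neq _ x y, s => (fun i => s (x i)) ≠ fun i => s (y i)
  | .dep _ _, _ => True
  | .and φ ψ, s => ssat RI φ s ∧ ssat RI ψ s
  | .or φ ψ, s => ssat RI φ s ∨ ssat RI ψ s
  | .ex v φ, s => ∃ m : M, ssat RI φ (Function.update s v m)
  | .all v φ, s => ∀ m : M, ssat RI φ (Function.update s v m)

/-- A formula is first-order if it contains no dependency atoms. -/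
def TForm.isFO {σ : Type} {ar : σ → ℕ} {δ : Type} {dar : δ → ℕ} :
    TForm σ ar δ dar → Prop
  | .dep _ _ => False
  | .and φ ψ => φ.isFO ∧ ψ.isFO
  | .or φ ψ => φ.isFO ∧ ψ.isFO
  | .ex _ φ => φ.isFO
  | .all _ φ => φ.isFO
  | _ => True

/-- Free variables of a formula. -/
def TForm.free {σ : Type} {ar : σ → ℕ} {δ : Type} {dar : δ → ℕ} :
    TForm σ ar δ dar → Set ℕ
  | .rel _ ts => Set.range ts
  | .nrel _ ts => Set.range ts
  | .eq _ x y => Set.range x ∪ Set.range y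
  | .neq _ x y => Set.range x ∪ Set.range y
  | .dep _ xs => Set.range xs
  | .and φ ψ => φ.free ∪ ψ.free
  | .or φ ψ => φ.free ∪ ψ.free
  | .ex v φ => φ.free \ {v}
  | .all v φ => φ.free \ {v}

/-- The flattening `φᶠ`: replace every dependency atom by the trivially true
atom `⊤` (here rendered as the empty-tuple equality). -/
def TForm.flatten {σ : Type} {ar : σ → ℕ} {δ : Type} {dar : δ → ℕ} :
    TForm σ ar δ dar → TForm σ ar δ dar
  | .dep _ _ => .eq 0 Fin.elim0 Fin.elim0
  | .and φ ψ => .and φ.flatten ψ.flatten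
  | .or φ ψ => .or φ.flatten ψ.flatten
  | .ex v φ => .ex v φ.flatten
  | .all v φ => .all v φ.flatten
  | φ => φ

/-- Negation normal form of the negation of a (first-order) formula. -/
def TForm.neg {σ : Type} {ar : σ → ℕ} {δ : Type} {dar : δ → ℕ} :
    TForm σ ar δ dar → TForm σ ar δ dar
  | .rel r ts => .nrel r ts
  | .nrel r ts => .rel r ts
  | .eq k x y => .neq k x y
  | .neq k x y => .eq k x y
  | .dep d xs => .dep d xs
  | .and φ ψ => .or φ.neg ψ.neg
  | .or φ ψ => .and φ.neg ψ.neg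
  | .ex v φ => .all v φ.neg
  | .all v φ => .ex v φ.neg

/-- `(ψ ↾ θ) := (¬θ) ∨ (θ ∧ ψ)`. -/
def TForm.restrict {σ : Type} {ar : σ → ℕ} {δ : Type} {dar : δ → ℕ}
    (ψ θ : TForm σ ar δ dar) : TForm σ ar δ dar :=
  .or θ.neg (.and θ ψ)

/-- A family of dependencies is upwards closed. -/
def UpClosed {δ : Type} {dar : δ → ℕ} (DI : DepFam δ dar) : Prop :=
  ∀ (d : δ) (M : Type) (R S : Set (Fin (dar d) → M)), R ⊆ S → DI d M R → DI d M S

/-- The constancy dependency of arity `n`. -/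
def ConstD (n : ℕ) : ∀ M : Type, Set (Fin n → M) → Prop :=
  fun _ R => ∀ t ∈ R, ∀ t' ∈ R, t = t'

/-- **Flatness of first-order formulas.**  If `φ` is first-order (in NNF), then
a team satisfies `φ` iff every assignment in it satisfies `φ` in the Tarski sense. -/
theorem flatness {σ : Type} {ar : σ → ℕ} {δ : Type} {dar : δ → ℕ} {M : Type}
    (RI : ∀ r : σ, Set (Fin (ar r) → M)) (DI : DepFam δ dar)
    (φ : TForm σ ar δ dar) (hφ : φ.isFO) (X : Team M) :
    tsat RI DI φ X ↔ ∀ s ∈ X, ssat RI φ s := by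
  induction φ generalizing X with
  | rel r ts => rfl
  | nrel r ts => rfl
  | eq k x y => rfl
  | neq k x y => rfl
  | dep d xs => exact absurd hφ (by simp [TForm.isFO])
  | and φ ψ ihφ ihψ =>
    obtain ⟨h1, h2⟩ := hφ
    simp only [tsat, ssat, ihφ h1, ihψ h2]
    constructor
    · rintro ⟨a, b⟩ s hs; exact ⟨a s hs, b s hs⟩
    · intro h; exact ⟨fun s hs => (h s hs).1, fun s hs => (h s hs).2⟩
  | or φ ψ ihφ ihψ =>
    obtain ⟨h1, h2⟩ := hφ
    simp only [tsat, ssat]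
    constructor
    · rintro ⟨Y, Z, rfl, hY, hZ⟩ s hs
      rcases hs with hs | hs
      · exact Or.inl ((ihφ h1 Y).1 hY s hs)
      · exact Or.inr ((ihψ h2 Z).1 hZ s hs)
    · intro h
      refine ⟨{s ∈ X | ssat RI φ s}, {s ∈ X | ssat RI ψ s}, ?_, ?_, ?_⟩
      · ext s
        constructor
        · intro hs; rcases h s hs with hl | hl
          · exact Or.inl ⟨hs, hl⟩
          · exact Or.inr ⟨hs, hl⟩
        · rintro (⟨hs, _⟩ | ⟨hs, _⟩) <;> exact hs
      · exact (ihφ h1 _).2 fun s hs => hs.2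
      · exact (ihψ h2 _).2 fun s hs => hs.2
  | ex v φ ih =>
    simp only [tsat, ssat]
    constructor
    · rintro ⟨H, hne, hsat⟩ s hs
      obtain ⟨m, hm⟩ := hne s hs
      exact ⟨m, (ih hφ _).1 hsat _ ⟨s, hs, m, hm, rfl⟩⟩
    · intro h
      refine ⟨fun s => {m | ssat RI φ (Function.update s v m)}, fun s hs => h s hs, ?_⟩
      refine (ih hφ _).2 ?_
      rintro s' ⟨s, hs, m, hm, rfl⟩
      exact hm
  | all v φ ih =>
    simp only [tsat, ssat]
    rw [ih hφ]
    constructor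
    · intro h s hs m; exact h _ ⟨s, hs, m, rfl⟩
    · rintro h s' ⟨s, hs, m, rfl⟩; exact h s hs m
end

section
/- (Locality) Let D be a family of dependencies and φ(x̄) a formula of FO(D) with free variables among x̄. Then for all models M and all teams X whose domain contains x̄, M ⊨_X φ(x̄) if and only if M ⊨_{X↾x̄} φ(x̄), where X↾x̄ is the team obtained by restricting all assignments in X to the variables x̄. -/
section LocalityAux

variable {M : Type}

lemma exists_agree {k : ℕ} {xb : Fin k → ℕ} {X Y : Team M} (h : X.rel xb = Y.rel xb)
    {s : ℕ → M} (hs : s ∈ X) :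
    ∃ s' ∈ Y, (fun i => s (xb i)) = fun i => s' (xb i) := by
  have hmem : (fun i => s (xb i)) ∈ X.rel xb := ⟨s, hs, rfl⟩
  rw [h] at hmem
  exact hmem

lemma agree_on {k : ℕ} {xb : Fin k → ℕ} {s s' : ℕ → M}
    (h : (fun i => s (xb i)) = fun i => s' (xb i)) {n : ℕ} {ts : Fin n → ℕ}
    (hts : Set.range ts ⊆ Set.range xb) :
    (fun i => s (ts i)) = fun i => s' (ts i) := by
  funext i
  obtain ⟨j, hj⟩ := hts ⟨i, rfl⟩
  rw [← hj]
  exact congrFun h j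

lemma rel_sub_of_sub {k n : ℕ} {xb : Fin k → ℕ} {xs : Fin n → ℕ}
    (hsub : Set.range xs ⊆ Set.range xb) {X Y : Team M} (h : X.rel xb = Y.rel xb) :
    X.rel xs ⊆ Y.rel xs := by
  rintro t ⟨s, hs, rfl⟩
  obtain ⟨s', hs', hag⟩ := exists_agree h hs
  exact ⟨s', hs', agree_on hag hsub⟩

lemma update_agree {k : ℕ} {xb : Fin k → ℕ} {v : ℕ} {s s' : ℕ → M}
    (h : (fun i => s (xb i)) = fun i => s' (xb i)) (m : M) :
    (fun i => Function.update s v m ((Fin.snoc xb v : Fin (k + 1) → ℕ) i))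
      = fun i => Function.update s' v m ((Fin.snoc xb v : Fin (k + 1) → ℕ) i) := by
  funext i
  refine Fin.lastCases ?_ ?_ i
  · rw [Fin.snoc_last, Function.update_self, Function.update_self]
  · intro j
    simp only [Fin.snoc_castSucc, Function.update_apply]
    split
    · rfl
    · exact congrFun h j

lemma free_snoc {k : ℕ} {xb : Fin k → ℕ} {v : ℕ} {S : Set ℕ}
    (h : S \ {v} ⊆ Set.range xb) : S ⊆ Set.range (Fin.snoc xb v : Fin (k + 1) → ℕ) := by
  intro u hu
  by_cases huv : u = v
  · exact ⟨Fin.last k, by simp [huv]⟩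
  · obtain ⟨j, hj⟩ := h ⟨hu, huv⟩
    exact ⟨j.castSucc, by simp [hj]⟩

lemma tsat_mono {σ : Type} {ar : σ → ℕ} {δ : Type} {dar : δ → ℕ}
    (RI : ∀ r : σ, Set (Fin (ar r) → M)) (DI : DepFam δ dar)
    (φ : TForm σ ar δ dar) :
    ∀ {k : ℕ} (xb : Fin k → ℕ), φ.free ⊆ Set.range xb →
      ∀ X Y : Team M, X.rel xb = Y.rel xb → tsat RI DI φ X → tsat RI DI φ Y := by
  induction φ with
  | rel r ts =>
    intro k xb hfree X Y hXY hX s hs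
    obtain ⟨s', hs', hag⟩ := exists_agree hXY.symm hs
    rw [agree_on hag hfree]
    exact hX s' hs'
  | nrel r ts =>
    intro k xb hfree X Y hXY hX s hs
    obtain ⟨s', hs', hag⟩ := exists_agree hXY.symm hs
    rw [agree_on hag hfree]
    exact hX s' hs'
  | eq n x y =>
    intro k xb hfree X Y hXY hX s hs
    obtain ⟨s', hs', hag⟩ := exists_agree hXY.symm hs
    have hx : Set.range x ⊆ Set.range xb := fun u hu => hfree (Or.inl hu)
    have hy : Set.range y ⊆ Set.range xb := fun u hu => hfree (Or.inr hu)
    rw [agree_on hag hx, agree_on hag hy]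
    exact hX s' hs'
  | neq n x y =>
    intro k xb hfree X Y hXY hX s hs
    obtain ⟨s', hs', hag⟩ := exists_agree hXY.symm hs
    have hx : Set.range x ⊆ Set.range xb := fun u hu => hfree (Or.inl hu)
    have hy : Set.range y ⊆ Set.range xb := fun u hu => hfree (Or.inr hu)
    rw [agree_on hag hx, agree_on hag hy]
    exact hX s' hs'
  | dep d xs =>
    intro k xb hfree X Y hXY hX
    have : X.rel xs = Y.rel xs :=
      Set.Subset.antisymm (rel_sub_of_sub hfree hXY) (rel_sub_of_sub hfree hXY.symm)
    simpa [tsat, ← this] using hX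
  | and φ ψ ihφ ihψ =>
    intro k xb hfree X Y hXY hX
    have hfφ : φ.free ⊆ Set.range xb := fun u hu => hfree (Or.inl hu)
    have hfψ : ψ.free ⊆ Set.range xb := fun u hu => hfree (Or.inr hu)
    exact ⟨ihφ xb hfφ X Y hXY hX.1, ihψ xb hfψ X Y hXY hX.2⟩
  | or φ ψ ihφ ihψ =>
    intro k xb hfree X Y hXY hX
    obtain ⟨A, B, hAB, hA, hB⟩ := hX
    have hfφ : φ.free ⊆ Set.range xb := fun u hu => hfree (Or.inl hu)
    have hfψ : ψ.free ⊆ Set.range xb := fun u hu => hfree (Or.inr hu)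
    refine ⟨{s ∈ Y | (fun i => s (xb i)) ∈ A.rel xb},
            {s ∈ Y | (fun i => s (xb i)) ∈ B.rel xb}, ?_, ?_, ?_⟩
    · apply Set.Subset.antisymm
      · intro s hs
        obtain ⟨s', hs', hag⟩ := exists_agree hXY.symm hs
        rw [hAB] at hs'
        rcases hs' with h' | h'
        · exact Or.inl ⟨hs, hag ▸ ⟨s', h', rfl⟩⟩
        · exact Or.inr ⟨hs, hag ▸ ⟨s', h', rfl⟩⟩
      · rintro s (⟨hs, _⟩ | ⟨hs, _⟩) <;> exact hs
    · refine ihφ xb hfφ A _ ?_ hA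
      apply Set.Subset.antisymm
      · rintro t ⟨s, hs, rfl⟩
        have : (fun i => s (xb i)) ∈ X.rel xb := ⟨s, hAB ▸ Or.inl hs, rfl⟩
        rw [hXY] at this
        obtain ⟨s'', hs'', hag⟩ := this
        exact ⟨s'', ⟨hs'', hag ▸ ⟨s, hs, rfl⟩⟩, hag⟩
      · rintro t ⟨s, ⟨_, hmem⟩, rfl⟩
        exact hmem
    · refine ihψ xb hfψ B _ ?_ hB
      apply Set.Subset.antisymm
      · rintro t ⟨s, hs, rfl⟩
        have : (fun i => s (xb i)) ∈ X.rel xb := ⟨s, hAB ▸ Or.inr hs, rfl⟩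
        rw [hXY] at this
        obtain ⟨s'', hs'', hag⟩ := this
        exact ⟨s'', ⟨hs'', hag ▸ ⟨s, hs, rfl⟩⟩, hag⟩
      · rintro t ⟨s, ⟨_, hmem⟩, rfl⟩
        exact hmem
  | ex v φ ih =>
    intro k xb hfree X Y hXY hX
    obtain ⟨H, hne, hsat⟩ := hX
    refine ⟨fun s' => {m | ∃ s ∈ X, (fun i => s (xb i)) = (fun i => s' (xb i)) ∧ m ∈ H s},
            ?_, ?_⟩
    · intro s' hs'
      obtain ⟨s, hs, hag⟩ := exists_agree hXY.symm hs'
      obtain ⟨m, hm⟩ := hne s hs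
      exact ⟨m, s, hs, hag.symm, hm⟩
    · have hfree' : φ.free ⊆ Set.range (Fin.snoc xb v : Fin (k + 1) → ℕ) :=
        free_snoc hfree
      refine ih (Fin.snoc xb v) hfree' _ _ ?_ hsat
      apply Set.Subset.antisymm
      · rintro t ⟨s'', ⟨s, hs, m, hm, rfl⟩, rfl⟩
        obtain ⟨s', hs', hag⟩ := exists_agree hXY hs
        exact ⟨Function.update s' v m, ⟨s', hs', m, ⟨s, hs, hag, hm⟩, rfl⟩,
          update_agree hag m⟩
      · rintro t ⟨s'', ⟨s', hs', m, ⟨s, hs, hag, hm⟩, rfl⟩, rfl⟩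
        exact ⟨Function.update s v m, ⟨s, hs, m, hm, rfl⟩, (update_agree hag m).symm⟩
  | all v φ ih =>
    intro k xb hfree X Y hXY hX
    have hfree' : φ.free ⊆ Set.range (Fin.snoc xb v : Fin (k + 1) → ℕ) :=
      free_snoc hfree
    refine ih (Fin.snoc xb v) hfree' _ _ ?_ hX
    apply Set.Subset.antisymm
    · rintro t ⟨s'', ⟨s, hs, m, rfl⟩, rfl⟩
      obtain ⟨s', hs', hag⟩ := exists_agree hXY hs
      exact ⟨Function.update s' v m, ⟨s', hs', m, rfl⟩, update_agree hag m⟩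
    · rintro t ⟨s'', ⟨s', hs', m, rfl⟩, rfl⟩
      obtain ⟨s, hs, hag⟩ := exists_agree hXY.symm hs'
      exact ⟨Function.update s v m, ⟨s, hs, m, rfl⟩, update_agree hag m⟩

end LocalityAux

/-- **Locality.**  If the free variables of `φ` are among the tuple `x̄`, then
satisfaction of `φ` by a team only depends on the restriction of the team to
`x̄` (rendered here: any two teams with the same restriction `X↾x̄`, i.e. the
same relation `X(x̄)`, agree on `φ`). -/
theorem locality {σ : Type} {ar : σ → ℕ} {δ : Type} {dar : δ → ℕ} {M : Type}
    (RI : ∀ r : σ, Set (Fin (ar r) → M)) (DI : DepFam δ dar)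
    {k : ℕ} (xb : Fin k → ℕ) (φ : TForm σ ar δ dar) (hfree : φ.free ⊆ Set.range xb)
    (X Y : Team M) (hXY : X.rel xb = Y.rel xb) :
    tsat RI DI φ X ↔ tsat RI DI φ Y := by
  constructor
  · exact tsat_mono RI DI φ xb hfree X Y hXY
  · exact tsat_mono RI DI φ xb hfree Y X hXY.symm
end

section
/- Let φ be a formula of FO(D) where every dependency in D is upwards closed. Let M be a model and X ⊆ Y teams such that M ⊨_X φ and M ⊨_Y φᶠ. Then M ⊨_Y φ. -/
lemma ssat_flatten {σ : Type} {ar : σ → ℕ} {δ : Type} {dar : δ → ℕ} {M : Type}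
    (RI : ∀ r : σ, Set (Fin (ar r) → M)) (φ : TForm σ ar δ dar) (s : ℕ → M) :
    ssat RI φ.flatten s ↔ ssat RI φ s := by
  induction φ generalizing s with
  | dep d xs =>
    simp only [TForm.flatten, ssat, iff_true]
  | and φ ψ ihφ ihψ => simp [TForm.flatten, ssat, ihφ, ihψ]
  | or φ ψ ihφ ihψ => simp [TForm.flatten, ssat, ihφ, ihψ]
  | ex v φ ih => simp [TForm.flatten, ssat, ih]
  | all v φ ih => simp [TForm.flatten, ssat, ih]
  | _ => rfl

lemma tsat_ssat {σ : Type} {ar : σ → ℕ} {δ : Type} {dar : δ → ℕ} {M : Type}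
    (RI : ∀ r : σ, Set (Fin (ar r) → M)) (DI : DepFam δ dar)
    (φ : TForm σ ar δ dar) (X : Team M) (h : tsat RI DI φ X) :
    ∀ s ∈ X, ssat RI φ s := by
  induction φ generalizing X with
  | rel r ts => exact h
  | nrel r ts => exact h
  | eq k x y => exact h
  | neq k x y => exact h
  | dep d xs => intro s hs; trivial
  | and φ ψ ihφ ihψ => exact fun s hs => ⟨ihφ _ h.1 s hs, ihψ _ h.2 s hs⟩
  | or φ ψ ihφ ihψ =>
    obtain ⟨Y, Z, rfl, hY, hZ⟩ := h
    intro s hs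
    rcases hs with hs | hs
    · exact Or.inl (ihφ _ hY s hs)
    · exact Or.inr (ihψ _ hZ s hs)
  | ex v φ ih =>
    obtain ⟨H, hne, hsat⟩ := h
    intro s hs
    obtain ⟨m, hm⟩ := hne s hs
    exact ⟨m, ih _ hsat _ ⟨s, hs, m, hm, rfl⟩⟩
  | all v φ ih =>
    intro s hs m
    exact ih _ h _ ⟨s, hs, m, rfl⟩

lemma ssat_tsat_flatten {σ : Type} {ar : σ → ℕ} {δ : Type} {dar : δ → ℕ} {M : Type}
    (RI : ∀ r : σ, Set (Fin (ar r) → M)) (DI : DepFam δ dar)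
    (φ : TForm σ ar δ dar) (X : Team M) (h : ∀ s ∈ X, ssat RI φ s) :
    tsat RI DI φ.flatten X := by
  induction φ generalizing X with
  | rel r ts => exact h
  | nrel r ts => exact h
  | eq k x y => exact h
  | neq k x y => exact h
  | dep d xs =>
    intro s hs; funext i; exact i.elim0
  | and φ ψ ihφ ihψ => exact ⟨ihφ _ fun s hs => (h s hs).1, ihψ _ fun s hs => (h s hs).2⟩
  | or φ ψ ihφ ihψ =>
    refine ⟨{s ∈ X | ssat RI φ s}, {s ∈ X | ssat RI ψ s}, ?_, ?_, ?_⟩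
    · ext s; constructor
      · intro hs; rcases h s hs with h' | h'
        · exact Or.inl ⟨hs, h'⟩
        · exact Or.inr ⟨hs, h'⟩
      · rintro (⟨hs, _⟩ | ⟨hs, _⟩) <;> exact hs
    · exact ihφ _ fun s hs => hs.2
    · exact ihψ _ fun s hs => hs.2
  | ex v φ ih =>
    refine ⟨fun s => {m | ssat RI φ (Function.update s v m)}, fun s hs => h s hs, ?_⟩
    apply ih
    rintro s' ⟨s, hs, m, hm, rfl⟩
    exact hm
  | all v φ ih =>
    apply ih
    rintro s' ⟨s, hs, m, rfl⟩
    exact h s hs m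

/-- **Restricted upwards closure.**  For upwards closed dependencies: if
`X ⊆ Y`, `M ⊨_X φ` and `M ⊨_Y φᶠ`, then `M ⊨_Y φ`. -/
theorem upflat {σ : Type} {ar : σ → ℕ} {δ : Type} {dar : δ → ℕ} {M : Type}
    (RI : ∀ r : σ, Set (Fin (ar r) → M)) (DI : DepFam δ dar) (hup : UpClosed DI)
    (φ : TForm σ ar δ dar) (X Y : Team M) (hXY : X ⊆ Y)
    (hX : tsat RI DI φ X) (hY : tsat RI DI φ.flatten Y) :
    tsat RI DI φ Y := by
  induction φ generalizing X Y with
  | rel r ts => exact hY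
  | nrel r ts => exact hY
  | eq k x y => exact hY
  | neq k x y => exact hY
  | dep d xs =>
    refine hup d M _ _ ?_ hX
    rintro t ⟨s, hs, rfl⟩
    exact ⟨s, hXY hs, rfl⟩
  | and φ ψ ihφ ihψ =>
    exact ⟨ihφ _ _ hXY hX.1 hY.1, ihψ _ _ hXY hX.2 hY.2⟩
  | or φ ψ ihφ ihψ =>
    obtain ⟨X1, X2, rfl, hX1, hX2⟩ := hX
    have hYs : ∀ s ∈ Y, ssat RI φ s ∨ ssat RI ψ s := by
      intro s hs
      have h' := tsat_ssat RI DI _ Y hY s hs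
      simp only [TForm.flatten, ssat] at h'
      rcases h' with h' | h'
      · exact Or.inl ((ssat_flatten RI φ s).mp h')
      · exact Or.inr ((ssat_flatten RI ψ s).mp h')
    refine ⟨X1 ∪ {s ∈ Y | ssat RI φ s}, X2 ∪ {s ∈ Y | ssat RI ψ s}, ?_, ?_, ?_⟩
    · ext s; constructor
      · intro hs; rcases hYs s hs with h' | h'
        · exact Or.inl (Or.inr ⟨hs, h'⟩)
        · exact Or.inr (Or.inr ⟨hs, h'⟩)
      · rintro ((hs | ⟨hs, _⟩) | (hs | ⟨hs, _⟩))
        · exact hXY (Or.inl hs)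
        · exact hs
        · exact hXY (Or.inr hs)
        · exact hs
    · refine ihφ X1 _ Set.subset_union_left hX1 ?_
      apply ssat_tsat_flatten
      rintro s (hs | ⟨_, hs⟩)
      · exact tsat_ssat RI DI φ X1 hX1 s hs
      · exact hs
    · refine ihψ X2 _ Set.subset_union_left hX2 ?_
      apply ssat_tsat_flatten
      rintro s (hs | ⟨_, hs⟩)
      · exact tsat_ssat RI DI ψ X2 hX2 s hs
      · exact hs
  | ex v φ ih =>
    obtain ⟨H, hne, hsat⟩ := hX
    have hYs : ∀ s ∈ Y, ∃ m, ssat RI φ (Function.update s v m) := by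
      intro s hs
      have := tsat_ssat RI DI _ Y hY s hs
      obtain ⟨m, hm⟩ := this
      exact ⟨m, (ssat_flatten RI φ _).mp hm⟩
    refine ⟨fun s => {m | m ∈ H s ∧ s ∈ X} ∪ {m | ssat RI φ (Function.update s v m)},
      fun s hs => ?_, ?_⟩
    · obtain ⟨m, hm⟩ := hYs s hs
      exact ⟨m, Or.inr hm⟩
    · refine ih _ _ ?_ hsat ?_
      · rintro s' ⟨s, hs, m, hm, rfl⟩
        exact ⟨s, hXY hs, m, Or.inl ⟨hm, hs⟩, rfl⟩
      · apply ssat_tsat_flatten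
        rintro s' ⟨s, hs, m, (⟨hm, hsX⟩ | hm), rfl⟩
        · exact tsat_ssat RI DI φ _ hsat _ ⟨s, hsX, m, hm, rfl⟩
        · exact hm
  | all v φ ih =>
    refine ih _ _ ?_ hX hY
    rintro s' ⟨s, hs, m, rfl⟩
    exact ⟨s, hXY hs, m, rfl⟩
end

section
/- For any first-order formula θ and any FO(D)-formula ψ, define (ψ ↾ θ) := (¬θ) ∨ (θ ∧ ψ). Then M ⊨_X (ψ ↾ θ) if and only if M ⊨_Y ψ, where Y = {s ∈ X : M ⊨_s θ}. -/
theorem ssat_neg_iff {σ : Type} {ar : σ → ℕ} {δ : Type} {dar : δ → ℕ} {M : Type}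
    (RI : ∀ r : σ, Set (Fin (ar r) → M)) (θ : TForm σ ar δ dar) (hθ : θ.isFO)
    (s : ℕ → M) : ssat RI θ.neg s ↔ ¬ ssat RI θ s := by
  induction θ generalizing s with
  | rel r ts => simp [TForm.neg, ssat]
  | nrel r ts => simp [TForm.neg, ssat]
  | eq k x y => simp [TForm.neg, ssat]
  | neq k x y => simp [TForm.neg, ssat]
  | dep d xs => exact hθ.elim
  | and φ ψ ihφ ihψ =>
    simp only [TForm.neg, ssat, ihφ hθ.1, ihψ hθ.2, not_and_or]
  | or φ ψ ihφ ihψ =>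
    simp only [TForm.neg, ssat, ihφ hθ.1, ihψ hθ.2, not_or]
  | ex v φ ih =>
    simp only [TForm.neg, ssat, ih hθ, not_exists]
  | all v φ ih =>
    simp only [TForm.neg, ssat, ih hθ, not_forall]

theorem tsat_fo_iff {σ : Type} {ar : σ → ℕ} {δ : Type} {dar : δ → ℕ} {M : Type}
    (RI : ∀ r : σ, Set (Fin (ar r) → M)) (DI : DepFam δ dar)
    (θ : TForm σ ar δ dar) (hθ : θ.isFO) (X : Team M) :
    tsat RI DI θ X ↔ ∀ s ∈ X, ssat RI θ s := by
  induction θ generalizing X with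
  | rel r ts => simp [tsat, ssat]
  | nrel r ts => simp [tsat, ssat]
  | eq k x y => simp [tsat, ssat]
  | neq k x y => simp [tsat, ssat]
  | dep d xs => exact hθ.elim
  | and φ ψ ihφ ihψ =>
    simp only [tsat, ssat, ihφ hθ.1, ihψ hθ.2]
    constructor
    · rintro ⟨h1, h2⟩ s hs; exact ⟨h1 s hs, h2 s hs⟩
    · intro h; exact ⟨fun s hs => (h s hs).1, fun s hs => (h s hs).2⟩
  | or φ ψ ihφ ihψ =>
    simp only [tsat, ssat]
    constructor
    · rintro ⟨Y, Z, rfl, hY, hZ⟩ s hs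
      rcases hs with hs | hs
      · exact Or.inl ((ihφ hθ.1 Y).1 hY s hs)
      · exact Or.inr ((ihψ hθ.2 Z).1 hZ s hs)
    · intro h
      refine ⟨{s ∈ X | ssat RI φ s}, {s ∈ X | ssat RI ψ s}, ?_, ?_, ?_⟩
      · ext s; simp only [Set.mem_union, Set.mem_setOf_eq]
        constructor
        · intro hs; rcases h s hs with h' | h'
          · exact Or.inl ⟨hs, h'⟩
          · exact Or.inr ⟨hs, h'⟩
        · rintro (⟨hs, _⟩ | ⟨hs, _⟩) <;> exact hs
      · exact (ihφ hθ.1 _).2 fun s hs => hs.2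
      · exact (ihψ hθ.2 _).2 fun s hs => hs.2
  | ex v φ ih =>
    simp only [tsat, ssat]
    constructor
    · rintro ⟨H, hne, hφ⟩ s hs
      obtain ⟨m, hm⟩ := hne s hs
      exact ⟨m, (ih hθ _).1 hφ _ ⟨s, hs, m, hm, rfl⟩⟩
    · intro h
      refine ⟨fun s => {m | ssat RI φ (Function.update s v m)}, fun s hs => h s hs, ?_⟩
      refine (ih hθ _).2 ?_
      rintro s' ⟨s, hs, m, hm, rfl⟩
      exact hm
  | all v φ ih =>
    simp only [tsat, ssat, ih hθ]
    constructor
    · rintro h s hs m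
      exact h _ ⟨s, hs, m, rfl⟩
    · rintro h s' ⟨s, hs, m, rfl⟩
      exact h s hs m

/-- **Semantics of the restriction operator.**  For first-order `θ`,
`M ⊨_X (ψ ↾ θ)` iff `M ⊨_Y ψ` where `Y = {s ∈ X : M ⊨_s θ}`. -/
theorem restrict_sem {σ : Type} {ar : σ → ℕ} {δ : Type} {dar : δ → ℕ} {M : Type}
    (RI : ∀ r : σ, Set (Fin (ar r) → M)) (DI : DepFam δ dar)
    (ψ θ : TForm σ ar δ dar) (hθ : θ.isFO) (X : Team M) :
    tsat RI DI (ψ.restrict θ) X ↔ tsat RI DI ψ {s ∈ X | ssat RI θ s} := by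
  have hnegFO : θ.neg.isFO := by
    clear X; induction θ with
    | and φ ψ ihφ ihψ => exact ⟨ihφ hθ.1, ihψ hθ.2⟩
    | or φ ψ ihφ ihψ => exact ⟨ihφ hθ.1, ihψ hθ.2⟩
    | ex v φ ih => exact ih hθ
    | all v φ ih => exact ih hθ
    | dep d xs => exact hθ.elim
    | _ => trivial
  constructor
  · rintro ⟨Y, Z, hX, hY, hmid⟩
    obtain ⟨hZθ, hZψ⟩ := hmid
    have hYn : ∀ s ∈ Y, ¬ ssat RI θ s := fun s hs =>
      (ssat_neg_iff RI θ hθ s).1 ((tsat_fo_iff RI DI θ.neg hnegFO Y).1 hY s hs)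
    have hZθ' : ∀ s ∈ Z, ssat RI θ s := (tsat_fo_iff RI DI θ hθ Z).1 hZθ
    have : {s ∈ X | ssat RI θ s} = Z := by
      ext s
      simp only [Set.mem_setOf_eq, hX, Set.mem_union]
      constructor
      · rintro ⟨hs | hs, hθs⟩
        · exact absurd hθs (hYn s hs)
        · exact hs
      · intro hs; exact ⟨Or.inr hs, hZθ' s hs⟩
    rwa [this]
  · intro h
    refine ⟨{s ∈ X | ¬ ssat RI θ s}, {s ∈ X | ssat RI θ s}, ?_, ?_, ?_, h⟩
    · ext s
      simp only [Set.mem_union, Set.mem_setOf_eq]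
      constructor
      · intro hs; by_cases hθs : ssat RI θ s
        · exact Or.inr ⟨hs, hθs⟩
        · exact Or.inl ⟨hs, hθs⟩
      · rintro (⟨hs, _⟩ | ⟨hs, _⟩) <;> exact hs
    · exact (tsat_fo_iff RI DI θ.neg hnegFO _).2
        fun s hs => (ssat_neg_iff RI θ hθ s).2 hs.2
    · exact (tsat_fo_iff RI DI θ hθ _).2 fun s hs => hs.2
end

section
/- For any formula φ of FO(D) (D arbitrary) and any model M with at least two elements, the possibility operator ◇φ (M ⊨_X ◇φ iff there is a nonempty Y ⊆ X with M ⊨_Y φ) is logically equivalent to ∃u₀ ∃u₁ ∃v (=(u₀) ∧ =(u₁) ∧ (v = u₀ ∨ v = u₁) ∧ (φ ↾ v = u₁) ∧ ≠(v)). -/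
/-- The inconstancy dependency of arity 1: `≠(v)`, i.e. `|X(v)| > 1`. -/
def InconstD : ∀ M : Type, Set (Fin 1 → M) → Prop :=
  fun _ R => ∃ t ∈ R, ∃ t' ∈ R, t ≠ t'

/-- Locality (one direction): lax team semantics only depends on the values of
assignments on the free variables of the formula. -/
lemma tsat_local_mono {σ : Type} {ar : σ → ℕ} {δ : Type} {dar : δ → ℕ} {M : Type}
    (RI : ∀ r : σ, Set (Fin (ar r) → M)) (DI : DepFam δ dar) :
    ∀ (φ : TForm σ ar δ dar) (Y Z : Team M),
    (∀ s ∈ Y, ∃ t ∈ Z, ∀ x ∈ φ.free, s x = t x) →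
    (∀ t ∈ Z, ∃ s ∈ Y, ∀ x ∈ φ.free, t x = s x) →
    tsat RI DI φ Y → tsat RI DI φ Z := by
  intro φ
  induction φ with
  | rel r ts =>
    intro Y Z _ h2 hY t ht
    obtain ⟨s, hs, hag⟩ := h2 t ht
    have : (fun i => t (ts i)) = fun i => s (ts i) :=
      funext fun i => hag (ts i) ⟨i, rfl⟩
    rw [this]; exact hY s hs
  | nrel r ts =>
    intro Y Z _ h2 hY t ht
    obtain ⟨s, hs, hag⟩ := h2 t ht
    have : (fun i => t (ts i)) = fun i => s (ts i) :=
      funext fun i => hag (ts i) ⟨i, rfl⟩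
    rw [this]; exact hY s hs
  | eq k x y =>
    intro Y Z _ h2 hY t ht
    obtain ⟨s, hs, hag⟩ := h2 t ht
    have hsx : (fun i => s (x i)) = fun i => s (y i) := hY s hs
    funext i
    calc t (x i) = s (x i) := hag (x i) (Or.inl ⟨i, rfl⟩)
      _ = s (y i) := congrFun hsx i
      _ = t (y i) := (hag (y i) (Or.inr ⟨i, rfl⟩)).symm
  | neq k x y =>
    intro Y Z _ h2 hY t ht heq
    obtain ⟨s, hs, hag⟩ := h2 t ht
    refine hY s hs (funext fun i => ?_)
    calc s (x i) = t (x i) := (hag (x i) (Or.inl ⟨i, rfl⟩)).symm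
      _ = t (y i) := congrFun heq i
      _ = s (y i) := hag (y i) (Or.inr ⟨i, rfl⟩)
  | dep d xs =>
    intro Y Z h1 h2 hY
    have : Team.rel Y xs = Team.rel Z xs := by
      ext u
      constructor
      · rintro ⟨s, hs, rfl⟩
        obtain ⟨t, ht, hag⟩ := h1 s hs
        exact ⟨t, ht, funext fun i => (hag (xs i) ⟨i, rfl⟩)⟩
      · rintro ⟨t, ht, rfl⟩
        obtain ⟨s, hs, hag⟩ := h2 t ht
        exact ⟨s, hs, funext fun i => (hag (xs i) ⟨i, rfl⟩)⟩
    show DI d M (Team.rel Z xs)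
    rw [← this]; exact hY
  | and φ ψ ihφ ihψ =>
    intro Y Z h1 h2 hY
    refine ⟨ihφ Y Z ?_ ?_ hY.1, ihψ Y Z ?_ ?_ hY.2⟩
    · exact fun s hs => (h1 s hs).imp fun t ⟨ht, hag⟩ =>
        ⟨ht, fun x hx => hag x (Or.inl hx)⟩
    · exact fun t ht => (h2 t ht).imp fun s ⟨hs, hag⟩ =>
        ⟨hs, fun x hx => hag x (Or.inl hx)⟩
    · exact fun s hs => (h1 s hs).imp fun t ⟨ht, hag⟩ =>
        ⟨ht, fun x hx => hag x (Or.inr hx)⟩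
    · exact fun t ht => (h2 t ht).imp fun s ⟨hs, hag⟩ =>
        ⟨hs, fun x hx => hag x (Or.inr hx)⟩
  | or φ ψ ihφ ihψ =>
    intro Y Z h1 h2 hY
    obtain ⟨Y₁, Y₂, rfl, hY₁, hY₂⟩ := hY
    refine ⟨{t ∈ Z | ∃ s ∈ Y₁, ∀ x ∈ TForm.free φ, t x = s x},
            {t ∈ Z | ∃ s ∈ Y₂, ∀ x ∈ TForm.free ψ, t x = s x}, ?_, ?_, ?_⟩
    · apply Set.Subset.antisymm
      · intro t ht
        obtain ⟨s, hs, hag⟩ := h2 t ht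
        rcases hs with hs | hs
        · exact Or.inl ⟨ht, s, hs, fun x hx => hag x (Or.inl hx)⟩
        · exact Or.inr ⟨ht, s, hs, fun x hx => hag x (Or.inr hx)⟩
      · rintro t (⟨ht, _⟩ | ⟨ht, _⟩) <;> exact ht
    · refine ihφ Y₁ _ ?_ ?_ hY₁
      · intro s hs
        obtain ⟨t, ht, hag⟩ := h1 s (Or.inl hs)
        exact ⟨t, ⟨ht, s, hs, fun x hx => (hag x (Or.inl hx)).symm⟩,
          fun x hx => hag x (Or.inl hx)⟩
      · rintro t ⟨_, s, hs, hag⟩; exact ⟨s, hs, hag⟩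
    · refine ihψ Y₂ _ ?_ ?_ hY₂
      · intro s hs
        obtain ⟨t, ht, hag⟩ := h1 s (Or.inr hs)
        exact ⟨t, ⟨ht, s, hs, fun x hx => (hag x (Or.inr hx)).symm⟩,
          fun x hx => hag x (Or.inr hx)⟩
      · rintro t ⟨_, s, hs, hag⟩; exact ⟨s, hs, hag⟩
  | ex w φ ih =>
    intro Y Z h1 h2 hY
    obtain ⟨H, hne, hsat⟩ := hY
    refine ⟨fun t => {m | ∃ s ∈ Y, (∀ x ∈ TForm.free (.ex w φ), t x = s x) ∧ m ∈ H s},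
      ?_, ?_⟩
    · intro t ht
      obtain ⟨s, hs, hag⟩ := h2 t ht
      obtain ⟨m, hm⟩ := hne s hs
      exact ⟨m, s, hs, hag, hm⟩
    · refine ih _ _ ?_ ?_ hsat
      · rintro s' ⟨s, hs, m, hm, rfl⟩
        obtain ⟨t, ht, hag⟩ := h1 s hs
        refine ⟨Function.update t w m, ⟨t, ht, m, ⟨s, hs, fun x hx => (hag x hx).symm, hm⟩, rfl⟩, ?_⟩
        intro x hx
        by_cases hxw : x = w
        · subst hxw; simp [Function.update_self]
        · rw [Function.update_of_ne hxw, Function.update_of_ne hxw]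
          exact hag x ⟨hx, hxw⟩
      · rintro t' ⟨t, ht, m, ⟨s, hs, hag, hm⟩, rfl⟩
        refine ⟨Function.update s w m, ⟨s, hs, m, hm, rfl⟩, ?_⟩
        intro x hx
        by_cases hxw : x = w
        · subst hxw; simp [Function.update_self]
        · rw [Function.update_of_ne hxw, Function.update_of_ne hxw]
          exact hag x ⟨hx, hxw⟩
  | all w φ ih =>
    intro Y Z h1 h2 hY
    refine ih _ _ ?_ ?_ hY
    · rintro s' ⟨s, hs, m, rfl⟩
      obtain ⟨t, ht, hag⟩ := h1 s hs
      refine ⟨Function.update t w m, ⟨t, ht, m, rfl⟩, ?_⟩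
      intro x hx
      by_cases hxw : x = w
      · subst hxw; simp [Function.update_self]
      · rw [Function.update_of_ne hxw, Function.update_of_ne hxw]
        exact hag x ⟨hx, hxw⟩
    · rintro t' ⟨t, ht, m, rfl⟩
      obtain ⟨s, hs, hag⟩ := h2 t ht
      refine ⟨Function.update s w m, ⟨s, hs, m, rfl⟩, ?_⟩
      intro x hx
      by_cases hxw : x = w
      · subst hxw; simp [Function.update_self]
      · rw [Function.update_of_ne hxw, Function.update_of_ne hxw]
        exact hag x ⟨hx, hxw⟩

lemma tsat_local {σ : Type} {ar : σ → ℕ} {δ : Type} {dar : δ → ℕ} {M : Type}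
    (RI : ∀ r : σ, Set (Fin (ar r) → M)) (DI : DepFam δ dar)
    (φ : TForm σ ar δ dar) (Y Z : Team M)
    (h1 : ∀ s ∈ Y, ∃ t ∈ Z, ∀ x ∈ φ.free, s x = t x)
    (h2 : ∀ t ∈ Z, ∃ s ∈ Y, ∀ x ∈ φ.free, t x = s x) :
    tsat RI DI φ Y ↔ tsat RI DI φ Z :=
  ⟨tsat_local_mono RI DI φ Y Z h1 h2, tsat_local_mono RI DI φ Z Y h2 h1⟩


/-- Auxiliary: the double update setting `u₀ ↦ a`, `u₁ ↦ b`. -/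
def upd2 {M : Type} (u₀ u₁ : ℕ) (a b : M) (s : ℕ → M) : ℕ → M :=
  Function.update (Function.update s u₀ a) u₁ b

/-- Auxiliary choice function for the possibility-operator proof. -/
def possHv {M : Type} (u₀ u₁ : ℕ) (a b : M) (Y : Team M) (s₀ : ℕ → M) : (ℕ → M) → Set M :=
  fun s' => {m | (m = b ∧ ∃ y ∈ Y, s' = upd2 u₀ u₁ a b y) ∨
    (m = a ∧ ((¬ ∃ y ∈ Y, s' = upd2 u₀ u₁ a b y) ∨ s' = upd2 u₀ u₁ a b s₀))}

/-- Semantics of a triple existential, with the resulting team given by a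
membership characterization. -/
lemma ex3_sem_iff {σ : Type} {ar : σ → ℕ} {δ : Type} {dar : δ → ℕ} {M : Type}
    (RI : ∀ r : σ, Set (Fin (ar r) → M)) (DI : DepFam δ dar)
    (ψ : TForm σ ar δ dar) (p q r : ℕ) (X : Team M) :
    tsat RI DI (.ex p (.ex q (.ex r ψ))) X ↔
    ∃ H₀ H₁ H₂ : (ℕ → M) → Set M,
      (∀ s ∈ X, (H₀ s).Nonempty) ∧
      (∀ s ∈ X, ∀ m₀ ∈ H₀ s, (H₁ (Function.update s p m₀)).Nonempty) ∧
      (∀ s ∈ X, ∀ m₀ ∈ H₀ s, ∀ m₁ ∈ H₁ (Function.update s p m₀),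
        (H₂ (Function.update (Function.update s p m₀) q m₁)).Nonempty) ∧
      ∀ T : Team M, (∀ t, t ∈ T ↔ ∃ s ∈ X, ∃ m₀ ∈ H₀ s, ∃ m₁ ∈ H₁ (Function.update s p m₀),
          ∃ m₂ ∈ H₂ (Function.update (Function.update s p m₀) q m₁),
          t = Function.update (Function.update (Function.update s p m₀) q m₁) r m₂) →
        tsat RI DI ψ T := by
  simp only [tsat]
  constructor
  · rintro ⟨H₀, h₀, H₁, h₁, H₂, h₂, hs⟩
    refine ⟨H₀, H₁, H₂, h₀, ?_, ?_, ?_⟩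
    · intro s hsX m₀ hm₀
      exact h₁ _ ⟨s, hsX, m₀, hm₀, rfl⟩
    · intro s hsX m₀ hm₀ m₁ hm₁
      exact h₂ _ ⟨_, ⟨s, hsX, m₀, hm₀, rfl⟩, m₁, hm₁, rfl⟩
    · intro T hT
      refine tsat_local_mono RI DI ψ _ T ?_ ?_ hs
      · rintro t ⟨s2, ⟨s1, ⟨s, hsX, m₀, hm₀, rfl⟩, m₁, hm₁, rfl⟩, m₂, hm₂, rfl⟩
        exact ⟨_, (hT _).mpr ⟨s, hsX, m₀, hm₀, m₁, hm₁, m₂, hm₂, rfl⟩, fun x _ => rfl⟩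
      · intro t ht
        obtain ⟨s, hsX, m₀, hm₀, m₁, hm₁, m₂, hm₂, rfl⟩ := (hT t).mp ht
        exact ⟨_, ⟨_, ⟨_, ⟨s, hsX, m₀, hm₀, rfl⟩, m₁, hm₁, rfl⟩, m₂, hm₂, rfl⟩, fun x _ => rfl⟩
  · rintro ⟨H₀, H₁, H₂, h₀, h₁, h₂, hs⟩
    refine ⟨H₀, h₀, H₁, ?_, H₂, ?_, ?_⟩
    · rintro s1 ⟨s, hsX, m₀, hm₀, rfl⟩
      exact h₁ s hsX m₀ hm₀
    · rintro s2 ⟨s1, ⟨s, hsX, m₀, hm₀, rfl⟩, m₁, hm₁, rfl⟩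
      exact h₂ s hsX m₀ hm₀ m₁ hm₁
    · refine hs _ fun t => ⟨?_, ?_⟩
      · rintro ⟨s2, ⟨s1, ⟨s, hsX, m₀, hm₀, rfl⟩, m₁, hm₁, rfl⟩, m₂, hm₂, rfl⟩
        exact ⟨s, hsX, m₀, hm₀, m₁, hm₁, m₂, hm₂, rfl⟩
      · rintro ⟨s, hsX, m₀, hm₀, m₁, hm₁, m₂, hm₂, rfl⟩
        exact ⟨_, ⟨_, ⟨s, hsX, m₀, hm₀, rfl⟩, m₁, hm₁, rfl⟩, m₂, hm₂, rfl⟩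

/-- **Definability of the possibility operator.**  Over models with at least two
elements, `◇φ` (some nonempty subteam satisfies `φ`) is logically equivalent to
`∃u₀ ∃u₁ ∃v (=(u₀) ∧ =(u₁) ∧ (v = u₀ ∨ v = u₁) ∧ (φ ↾ v = u₁) ∧ ≠(v))`,
for fresh distinct variables `u₀, u₁, v`.  Dependency atoms are indexed by
`δ ⊕ Bool`, with `.inr false` the constancy atom and `.inr true` the
inconstancy atom (both unary). -/
theorem possibility_def {σ : Type} {ar : σ → ℕ} {δ : Type} {dar : δ → ℕ}
    (DI : DepFam δ dar) {M : Type} [Nontrivial M]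
    (RI : ∀ r : σ, Set (Fin (ar r) → M))
    (φ : TForm σ ar (δ ⊕ Bool) (Sum.elim dar fun _ => 1))
    (u₀ u₁ v : ℕ) (h01 : u₀ ≠ u₁) (hv0 : v ≠ u₀) (hv1 : v ≠ u₁)
    (hu₀ : u₀ ∉ φ.free) (hu₁ : u₁ ∉ φ.free) (hv : v ∉ φ.free)
    (X : Team M) :
    (∃ Y : Team M, Y ⊆ X ∧ Y.Nonempty ∧
        tsat RI (fun d => match d with
          | .inl d => DI d | .inr false => ConstD 1 | .inr true => InconstD) φ Y) ↔
    tsat RI (fun d => match d with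
        | .inl d => DI d | .inr false => ConstD 1 | .inr true => InconstD)
      (.ex u₀ (.ex u₁ (.ex v
        (.and (.and (.and (.and
          (.dep (.inr false) fun _ => u₀)
          (.dep (.inr false) fun _ => u₁))
          (.or (.eq 1 (fun _ => v) fun _ => u₀) (.eq 1 (fun _ => v) fun _ => u₁)))
          (φ.restrict (.eq 1 (fun _ => v) fun _ => u₁)))
          (.dep (.inr true) fun _ => v))))) X := by
  classical
  rw [ex3_sem_iff]
  constructor
  · -- forward: from a nonempty subteam satisfying φ
    rintro ⟨Y, hYX, ⟨s₀, hs₀⟩, hYφ⟩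
    obtain ⟨a, b, hab⟩ := exists_pair_ne M
    -- evaluation lemmas
    have e0 : ∀ (s : ℕ → M) (c : M), Function.update (upd2 u₀ u₁ a b s) v c u₀ = a := by
      intro s c
      unfold upd2
      rw [Function.update_of_ne (Ne.symm hv0), Function.update_of_ne h01,
        Function.update_self]
    have e1 : ∀ (s : ℕ → M) (c : M), Function.update (upd2 u₀ u₁ a b s) v c u₁ = b := by
      intro s c
      unfold upd2
      rw [Function.update_of_ne (Ne.symm hv1), Function.update_self]
    have ev : ∀ (s : ℕ → M) (c : M), Function.update (upd2 u₀ u₁ a b s) v c v = c := by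
      intro s c
      rw [Function.update_self]
    have exx : ∀ (s : ℕ → M) (c : M) (x : ℕ), x ≠ u₀ → x ≠ u₁ → x ≠ v →
        Function.update (upd2 u₀ u₁ a b s) v c x = s x := by
      intro s c x h0 h1 h2
      unfold upd2
      rw [Function.update_of_ne h2, Function.update_of_ne h1, Function.update_of_ne h0]
    refine ⟨fun _ => {a}, fun _ => {b}, possHv u₀ u₁ a b Y s₀,
      fun _ _ => ⟨a, rfl⟩, fun _ _ _ _ => ⟨b, rfl⟩, ?_, ?_⟩
    · intro s _ m₀ _ m₁ _
      by_cases h : ∃ y ∈ Y, Function.update (Function.update s u₀ m₀) u₁ m₁ = upd2 u₀ u₁ a b y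
      · exact ⟨b, Or.inl ⟨rfl, h⟩⟩
      · exact ⟨a, Or.inr ⟨rfl, Or.inl h⟩⟩
    · intro T hT
      -- clean membership characterization
      have hTmem : ∀ t, t ∈ T ↔ ∃ s ∈ X, ∃ c ∈ possHv u₀ u₁ a b Y s₀ (upd2 u₀ u₁ a b s),
          t = Function.update (upd2 u₀ u₁ a b s) v c := by
        intro t
        rw [hT t]
        constructor
        · rintro ⟨s, hs, m₀, hm₀, m₁, hm₁, m₂, hm₂, rfl⟩
          have ha : m₀ = a := hm₀
          have hb : m₁ = b := hm₁
          subst ha; subst hb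
          exact ⟨s, hs, m₂, hm₂, rfl⟩
        · rintro ⟨s, hs, c, hc, rfl⟩
          exact ⟨s, hs, a, rfl, b, rfl, c, hc, rfl⟩
      have hval0 : ∀ t ∈ T, t u₀ = a := by
        intro t ht
        obtain ⟨s, _, c, _, rfl⟩ := (hTmem t).mp ht
        exact e0 s c
      have hval1 : ∀ t ∈ T, t u₁ = b := by
        intro t ht
        obtain ⟨s, _, c, _, rfl⟩ := (hTmem t).mp ht
        exact e1 s c
      have hvalv : ∀ t ∈ T, t v = a ∨ t v = b := by
        intro t ht
        obtain ⟨s, _, c, hc, rfl⟩ := (hTmem t).mp ht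
        rw [ev]
        rcases hc with ⟨hcb, _⟩ | ⟨hca, _⟩
        · exact Or.inr hcb
        · exact Or.inl hca
      have hBmem : ∀ t, (t ∈ T ∧ t v = b) ↔
          ∃ y ∈ Y, t = Function.update (upd2 u₀ u₁ a b y) v b := by
        intro t
        constructor
        · rintro ⟨ht, htv⟩
          obtain ⟨s, hs, c, hc, rfl⟩ := (hTmem t).mp ht
          rw [ev] at htv
          subst htv
          rcases hc with ⟨_, y, hy, he⟩ | ⟨hca, _⟩
          · exact ⟨y, hy, by rw [he]⟩
          · exact absurd hca.symm hab
        · rintro ⟨y, hy, rfl⟩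
          refine ⟨(hTmem _).mpr ⟨y, hYX hy, b, Or.inl ⟨rfl, y, hy, rfl⟩, rfl⟩, ev _ _⟩
      simp only [tsat, TForm.restrict, TForm.neg]
      refine ⟨⟨⟨⟨?_, ?_⟩, ?_⟩, ?_⟩, ?_⟩
      · -- constancy of u₀
        rintro p ⟨t, ht, rfl⟩ p' ⟨t', ht', rfl⟩
        funext i
        show t u₀ = t' u₀
        rw [hval0 t ht, hval0 t' ht']
      · -- constancy of u₁
        rintro p ⟨t, ht, rfl⟩ p' ⟨t', ht', rfl⟩
        funext i
        show t u₁ = t' u₁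
        rw [hval1 t ht, hval1 t' ht']
      · -- v = u₀ ∨ v = u₁
        refine ⟨{t ∈ T | t v = a}, {t ∈ T | t v = b}, ?_, ?_, ?_⟩
        · ext t
          constructor
          · intro ht
            rcases hvalv t ht with h | h
            · exact Or.inl ⟨ht, h⟩
            · exact Or.inr ⟨ht, h⟩
          · rintro (⟨ht, _⟩ | ⟨ht, _⟩) <;> exact ht
        · rintro t ⟨ht, htv⟩
          funext i
          show t v = t u₀
          rw [htv, hval0 t ht]
        · rintro t ⟨ht, htv⟩
          funext i
          show t v = t u₁
          rw [htv, hval1 t ht]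
      · -- φ restricted to v = u₁
        refine ⟨{t ∈ T | t v = a}, {t ∈ T | t v = b}, ?_, ?_, ?_, ?_⟩
        · ext t
          constructor
          · intro ht
            rcases hvalv t ht with h | h
            · exact Or.inl ⟨ht, h⟩
            · exact Or.inr ⟨ht, h⟩
          · rintro (⟨ht, _⟩ | ⟨ht, _⟩) <;> exact ht
        · rintro t ⟨ht, htv⟩ h
          have h0 := congrFun h 0
          rw [htv, hval1 t ht] at h0
          exact hab h0
        · rintro t ⟨ht, htv⟩
          funext i
          show t v = t u₁
          rw [htv, hval1 t ht]
        · -- the subteam with v = b satisfies φ, by locality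
          refine tsat_local_mono _ _ φ Y _ ?_ ?_ hYφ
          · intro y hy
            refine ⟨Function.update (upd2 u₀ u₁ a b y) v b,
              (hBmem _).mpr ⟨y, hy, rfl⟩, ?_⟩
            intro x hx
            have h0 : x ≠ u₀ := fun h => hu₀ (h ▸ hx)
            have h1 : x ≠ u₁ := fun h => hu₁ (h ▸ hx)
            have h2 : x ≠ v := fun h => hv (h ▸ hx)
            exact (exx y b x h0 h1 h2).symm
          · rintro t ⟨ht, htv⟩
            obtain ⟨y, hy, rfl⟩ := (hBmem t).mp ⟨ht, htv⟩
            refine ⟨y, hy, ?_⟩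
            intro x hx
            have h0 : x ≠ u₀ := fun h => hu₀ (h ▸ hx)
            have h1 : x ≠ u₁ := fun h => hu₁ (h ▸ hx)
            have h2 : x ≠ v := fun h => hv (h ▸ hx)
            exact exx y b x h0 h1 h2
      · -- inconstancy of v
        have ht1 : Function.update (upd2 u₀ u₁ a b s₀) v b ∈ T :=
          ((hBmem _).mpr ⟨s₀, hs₀, rfl⟩).1
        have ht2 : Function.update (upd2 u₀ u₁ a b s₀) v a ∈ T :=
          (hTmem _).mpr ⟨s₀, hYX hs₀, a, Or.inr ⟨rfl, Or.inr rfl⟩, rfl⟩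
        refine ⟨_, ⟨_, ht1, rfl⟩, _, ⟨_, ht2, rfl⟩, ?_⟩
        intro h
        have h0 := congrFun h ⟨0, Nat.zero_lt_one⟩
        simp only at h0
        rw [ev, ev] at h0
        exact hab h0.symm
  · -- backward: extract a nonempty subteam satisfying φ
    rintro ⟨H₀, H₁, H₂, hne₀, hne₁, hne₂, hsat⟩
    set T : Team M := {t | ∃ s ∈ X, ∃ m₀ ∈ H₀ s, ∃ m₁ ∈ H₁ (Function.update s u₀ m₀),
        ∃ m₂ ∈ H₂ (Function.update (Function.update s u₀ m₀) u₁ m₁),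
        t = Function.update (Function.update (Function.update s u₀ m₀) u₁ m₁) v m₂}
      with hTdef
    have hsT := hsat T fun t => Iff.rfl
    simp only [tsat, TForm.restrict, TForm.neg] at hsT
    obtain ⟨⟨⟨⟨C1, C2⟩, C3⟩, A, B, hAB, hA, hBeq, hφB⟩, C5⟩ := hsT
    have hu0c : ∀ p ∈ T, ∀ q ∈ T, p u₀ = q u₀ := fun p hp q hq =>
      congrFun (C1 _ ⟨p, hp, rfl⟩ _ ⟨q, hq, rfl⟩) ⟨0, Nat.zero_lt_one⟩
    have hvor : ∀ t ∈ T, t v = t u₀ ∨ t v = t u₁ := by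
      obtain ⟨Y1, Y2, hY12, hY1, hY2⟩ := C3
      intro t ht
      rw [hY12] at ht
      rcases ht with h | h
      · exact Or.inl (congrFun (hY1 t h) 0)
      · exact Or.inr (congrFun (hY2 t h) 0)
    obtain ⟨_, ⟨p, hp, rfl⟩, _, ⟨q, hq, rfl⟩, hnepq⟩ := C5
    have hpqv : p v ≠ q v := fun h => hnepq (funext fun _ => h)
    -- find an assignment in T with v-value equal to u₁-value
    have hw : ∃ w ∈ T, w v = w u₁ := by
      rcases hvor p hp with h | h
      · rcases hvor q hq with h' | h'
        · exact absurd (h.trans ((hu0c p hp q hq).trans h'.symm)) hpqv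
        · exact ⟨q, hq, h'⟩
      · exact ⟨p, hp, h⟩
    obtain ⟨w, hwT, hwv⟩ := hw
    have hwB : w ∈ B := by
      have hw' : w ∈ A ∪ B := hAB ▸ hwT
      rcases hw' with h | h
      · exact absurd (funext fun _ => hwv : (fun _ : Fin 1 => w v) = fun _ => w u₁) (hA w h)
      · exact h
    have hBT : B ⊆ T := hAB ▸ Set.subset_union_right
    refine ⟨{s ∈ X | ∃ t ∈ B, ∀ x, x ≠ u₀ → x ≠ u₁ → x ≠ v → s x = t x},
      fun s hs => hs.1, ?_, ?_⟩
    · obtain ⟨s, hsX, m₀, _, m₁, _, m₂, _, heq⟩ := hBT hwB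
      refine ⟨s, hsX, w, hwB, ?_⟩
      intro x h0 h1 h2
      rw [heq, Function.update_of_ne h2, Function.update_of_ne h1, Function.update_of_ne h0]
    · refine tsat_local_mono _ _ φ B _ ?_ ?_ hφB
      · intro t htB
        obtain ⟨s, hsX, m₀, _, m₁, _, m₂, _, heq⟩ := hBT htB
        refine ⟨s, ⟨hsX, t, htB, fun x h0 h1 h2 => by
          rw [heq, Function.update_of_ne h2, Function.update_of_ne h1,
            Function.update_of_ne h0]⟩, ?_⟩
        intro x hx
        have h0 : x ≠ u₀ := fun h => hu₀ (h ▸ hx)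
        have h1 : x ≠ u₁ := fun h => hu₁ (h ▸ hx)
        have h2 : x ≠ v := fun h => hv (h ▸ hx)
        rw [heq, Function.update_of_ne h2, Function.update_of_ne h1,
          Function.update_of_ne h0]
      · rintro s ⟨_, t, htB, hag⟩
        refine ⟨t, htB, ?_⟩
        intro x hx
        have h0 : x ≠ u₀ := fun h => hu₀ (h ▸ hx)
        have h1 : x ≠ u₁ := fun h => hu₁ (h ▸ hx)
        have h2 : x ≠ v := fun h => hv (h ▸ hx)
        exact hag x h0 h1 h2
end

section
/- The negated inclusion atom x̄ ⊄ ȳ (where |x̄| = |ȳ|), with semantics M ⊨_X x̄ ⊄ ȳ iff there is s ∈ X such that s(x̄) ≠ s'(ȳ) for all s' ∈ X, is logically equivalent to ∃z̄ (=(z̄) ∧ ◇(z̄ = x̄) ∧ z̄ ≠ ȳ), assuming models have at least two elements. -/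
/-- Iterated existential quantification (outermost quantifier is `v 0`). -/
def TForm.exs {σ : Type} {ar : σ → ℕ} {δ : Type} {dar : δ → ℕ} :
    {n : ℕ} → (Fin n → ℕ) → TForm σ ar δ dar → TForm σ ar δ dar
  | 0, _, φ => φ
  | _ + 1, v, φ => .ex (v 0) (TForm.exs (fun i => v i.succ) φ)

/-- The intersection dependency `◇(z̄ = x̄)` of arity `k + k`: some tuple in the
relation has its first half equal to its second half. -/
def IntersectD (k : ℕ) : ∀ M : Type, Set (Fin (k + k) → M) → Prop :=
  fun _ R => ∃ t ∈ R, (fun i : Fin k => t (Fin.castAdd k i)) = fun i => t (Fin.natAdd k i)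


section AuxNegIncl

variable {M : Type}

/-- Simultaneous sequential update of an assignment along a tuple of variables. -/
def updSeq : {n : ℕ} → (ℕ → M) → (Fin n → ℕ) → (Fin n → M) → (ℕ → M)
  | 0, s, _, _ => s
  | _ + 1, s, z, c =>
      updSeq (Function.update s (z 0) (c 0)) (fun i => z i.succ) (fun i => c i.succ)

lemma updSeq_notMem : ∀ {n : ℕ} (s : ℕ → M) (z : Fin n → ℕ) (c : Fin n → M)
    (v : ℕ), v ∉ Set.range z → updSeq s z c v = s v
  | 0, _, _, _, _, _ => rfl
  | n + 1, s, z, c, v, hv => by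
      have h1 : v ∉ Set.range fun i : Fin n => z i.succ := by
        rintro ⟨i, rfl⟩; exact hv ⟨i.succ, rfl⟩
      have h0 : v ≠ z 0 := by rintro rfl; exact hv ⟨0, rfl⟩
      simp only [updSeq]
      rw [updSeq_notMem _ _ _ _ h1, Function.update_of_ne h0]

lemma updSeq_apply : ∀ {n : ℕ} (s : ℕ → M) (z : Fin n → ℕ) (c : Fin n → M),
    Function.Injective z → ∀ i, updSeq s z c (z i) = c i
  | 0, _, _, _, _, i => i.elim0
  | n + 1, s, z, c, hz, i => by
      rcases Fin.eq_zero_or_eq_succ i with rfl | ⟨j, rfl⟩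
      · have hmem : z 0 ∉ Set.range fun i : Fin n => z i.succ := by
          rintro ⟨i, hi⟩
          exact (Fin.succ_ne_zero i) (hz hi)
        simp only [updSeq]
        rw [updSeq_notMem _ _ _ _ hmem, Function.update_self]
      · have hz' : Function.Injective fun i : Fin n => z i.succ := fun a b hab =>
          Fin.succ_injective _ (hz hab)
        simp only [updSeq]
        exact updSeq_apply _ _ _ hz' j

lemma exs_intro {σ : Type} {ar : σ → ℕ} {δ : Type} {dar : δ → ℕ}
    (RI : ∀ r : σ, Set (Fin (ar r) → M)) (DI : DepFam δ dar) :
    ∀ {n : ℕ} (z : Fin n → ℕ) (c : Fin n → M) (φ : TForm σ ar δ dar) (X : Team M),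
    tsat RI DI φ {s' | ∃ s ∈ X, s' = updSeq s z c} → tsat RI DI (TForm.exs z φ) X
  | 0, z, c, φ, X, h => by
      have hX : {s' | ∃ s ∈ X, s' = updSeq s z c} = X := by
        ext s; simp [updSeq]
      rw [hX] at h
      exact h
  | n + 1, z, c, φ, X, h => by
      refine ⟨fun _ => {c 0}, fun s _ => ⟨c 0, rfl⟩, ?_⟩
      apply exs_intro
      have hX : {s' | ∃ s1 ∈ {s' | ∃ s ∈ X, ∃ m ∈ ({c 0} : Set M),
            s' = Function.update s (z 0) m},
          s' = updSeq s1 (fun i => z i.succ) (fun i => c i.succ)} =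
          {s' | ∃ s ∈ X, s' = updSeq s z c} := by
        ext s'
        constructor
        · rintro ⟨s1, ⟨s, hs, m, rfl, rfl⟩, rfl⟩
          exact ⟨s, hs, rfl⟩
        · rintro ⟨s, hs, rfl⟩
          exact ⟨Function.update s (z 0) (c 0), ⟨s, hs, c 0, rfl, rfl⟩, rfl⟩
      rw [hX]
      exact h

lemma exs_elim {σ : Type} {ar : σ → ℕ} {δ : Type} {dar : δ → ℕ}
    (RI : ∀ r : σ, Set (Fin (ar r) → M)) (DI : DepFam δ dar) :
    ∀ {n : ℕ} (z : Fin n → ℕ) (φ : TForm σ ar δ dar) (X : Team M),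
    tsat RI DI (TForm.exs z φ) X →
    ∃ Y : Team M, tsat RI DI φ Y ∧
      (∀ s' ∈ Y, ∃ s ∈ X, ∀ v, v ∉ Set.range z → s' v = s v) ∧
      (∀ s ∈ X, ∃ s' ∈ Y, ∀ v, v ∉ Set.range z → s' v = s v)
  | 0, z, φ, X, h =>
      ⟨X, h, fun s hs => ⟨s, hs, fun _ _ => rfl⟩, fun s hs => ⟨s, hs, fun _ _ => rfl⟩⟩
  | n + 1, z, φ, X, h => by
      obtain ⟨H, hH, h'⟩ := h
      obtain ⟨Y, hY, hproj, hlift⟩ := exs_elim RI DI (fun i => z i.succ) φ _ h'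
      refine ⟨Y, hY, ?_, ?_⟩
      · intro s' hs'
        obtain ⟨s1, ⟨s, hs, m, _, rfl⟩, hagree⟩ := hproj s' hs'
        refine ⟨s, hs, fun v hv => ?_⟩
        have h1 : v ∉ Set.range fun i : Fin n => z i.succ := by
          rintro ⟨i, rfl⟩; exact hv ⟨i.succ, rfl⟩
        have h0 : v ≠ z 0 := by rintro rfl; exact hv ⟨0, rfl⟩
        rw [hagree v h1, Function.update_of_ne h0]
      · intro s hs
        obtain ⟨m, hm⟩ := hH s hs
        obtain ⟨s', hs', hagree⟩ := hlift (Function.update s (z 0) m) ⟨s, hs, m, hm, rfl⟩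
        refine ⟨s', hs', fun v hv => ?_⟩
        have h1 : v ∉ Set.range fun i : Fin n => z i.succ := by
          rintro ⟨i, rfl⟩; exact hv ⟨i.succ, rfl⟩
        have h0 : v ≠ z 0 := by rintro rfl; exact hv ⟨0, rfl⟩
        rw [hagree v h1, Function.update_of_ne h0]

end AuxNegIncl

/-- **Definability of negated inclusion.**  Over models with at least two
elements, the negated inclusion atom `x̄ ⊄ ȳ` (some `s ∈ X` has `s(x̄) ≠ s'(ȳ)`
for all `s' ∈ X`) is logically equivalent to `∃z̄ (=(z̄) ∧ ◇(z̄ = x̄) ∧ z̄ ≠ ȳ)`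
for a fresh tuple `z̄` of distinct variables.  Dependencies are indexed by
`Bool`: `false` is the constancy atom of arity `k`, `true` the intersection
atom of arity `k + k`. -/
theorem neg_inclusion_def {σ : Type} {ar : σ → ℕ} {M : Type} [Nontrivial M]
    (RI : ∀ r : σ, Set (Fin (ar r) → M))
    {k : ℕ} (x y z : Fin k → ℕ) (hz : Function.Injective z)
    (hzx : ∀ i j, z i ≠ x j) (hzy : ∀ i j, z i ≠ y j)
    (X : Team M) :
    (∃ s ∈ X, ∀ s' ∈ X, (fun i => s (x i)) ≠ fun i => s' (y i)) ↔
    tsat RI (fun b : Bool => match b with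
        | false => ConstD k | true => IntersectD k)
      (TForm.exs (dar := fun b => cond b (k + k) k) z
        (.and (.and (.dep false z) (.dep true (Fin.append z x))) (.neq k z y))) X := by
  
  constructor
  · rintro ⟨s0, hs0, hneq⟩
    set c : Fin k → M := fun i => s0 (x i) with hc
    apply exs_intro
    have hxz : ∀ j, x j ∉ Set.range z := by
      rintro j ⟨i, hi⟩; exact hzx i j hi
    have hyz : ∀ j, y j ∉ Set.range z := by
      rintro j ⟨i, hi⟩; exact hzy i j hi
    refine ⟨⟨?_, ?_⟩, ?_⟩
    · -- constancy
      rintro t ⟨s', ⟨s, hs, rfl⟩, rfl⟩ t' ⟨s'', ⟨s2, hs2, rfl⟩, rfl⟩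
      funext i
      simp only [updSeq_apply _ _ _ hz]
    · -- intersection
      refine ⟨fun i => updSeq s0 z c (Fin.append z x i),
        ⟨updSeq s0 z c, ⟨s0, hs0, rfl⟩, rfl⟩, ?_⟩
      funext i
      simp only [Fin.append_left, Fin.append_right]
      rw [updSeq_apply _ _ _ hz, updSeq_notMem _ _ _ _ (hxz i)]
    · -- inequality
      rintro s' ⟨s, hs, rfl⟩ habs
      apply hneq s hs
      funext i
      have h1 := congrFun habs i
      rw [updSeq_apply _ _ _ hz, updSeq_notMem _ _ _ _ (hyz i)] at h1
      exact h1
  · intro h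
    obtain ⟨Y, hY, hproj, hlift⟩ := exs_elim _ _ _ _ _ h
    obtain ⟨⟨hconst, hint⟩, hneq⟩ := hY
    obtain ⟨t, ⟨s', hs'Y, rfl⟩, ht⟩ := hint
    obtain ⟨s, hsX, hs⟩ := hproj s' hs'Y
    have hxz : ∀ j, x j ∉ Set.range z := by
      rintro j ⟨i, hi⟩; exact hzx i j hi
    have hyz : ∀ j, y j ∉ Set.range z := by
      rintro j ⟨i, hi⟩; exact hzy i j hi
    refine ⟨s, hsX, ?_⟩
    intro s'' hs''X habs
    obtain ⟨s3, hs3Y, hs3⟩ := hlift s'' hs''X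
    have hzz : (fun i => s' (z i)) = fun i => s3 (z i) :=
      hconst _ ⟨s', hs'Y, rfl⟩ _ ⟨s3, hs3Y, rfl⟩
    apply hneq s3 hs3Y
    funext i
    have h1 := congrFun ht i
    simp only [Fin.append_left, Fin.append_right] at h1
    have h2 : s' (x i) = s (x i) := hs (x i) (hxz i)
    have h3 : s3 (y i) = s'' (y i) := hs3 (y i) (hyz i)
    calc s3 (z i) = s' (z i) := (congrFun hzz i).symm
      _ = s' (x i) := h1
      _ = s (x i) := h2
      _ = s'' (y i) := congrFun habs i
      _ = s3 (y i) := h3.symm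
end

section
/- (Boundedness preservation) Let D be a family of bounded upwards closed dependencies. Then for every FO(D)-formula φ, every model M and every team X: if M ⊨_X φ then there exists Y ⊆ X with |Y| ≤ ht(φ) such that M ⊨_Y φ, where ht(φ) is the sum over all occurrences of dependency atoms D x̄ in φ of the least cardinal κ for which D is κ-bounded (first-order literals contribute 0). -/
/-- A dependency `D` of arity `n` is `κ`-bounded: whenever a team satisfies the
atom, some subteam of cardinality at most `κ` satisfies it. -/
def BoundedBy (n : ℕ) (D : ∀ M : Type, Set (Fin n → M) → Prop) (κ : Cardinal) : Prop :=
  ∀ (M : Type) (X : Team M) (xs : Fin n → ℕ), D M (X.rel xs) →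
    ∃ Y ⊆ X, Cardinal.mk Y ≤ κ ∧ D M (Y.rel xs)

/-- The height of a formula, given the bounding cardinal `κ d` of each
dependency: literals contribute `0`, a dependency atom contributes `κ d`, and
heights add over connectives. -/
def TForm.ht {σ : Type} {ar : σ → ℕ} {δ : Type} {dar : δ → ℕ} (κ : δ → Cardinal) :
    TForm σ ar δ dar → Cardinal
  | .dep d _ => κ d
  | .and φ ψ => φ.ht κ + ψ.ht κ
  | .or φ ψ => φ.ht κ + ψ.ht κ
  | .ex _ φ => φ.ht κ
  | .all _ φ => φ.ht κ
  | _ => 0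

lemma Team.rel_mono {M : Type} {X Y : Team M} (h : X ⊆ Y) {k : ℕ} (xs : Fin k → ℕ) :
    X.rel xs ⊆ Y.rel xs := fun t ⟨s, hs, ht⟩ => ⟨s, h hs, ht⟩

theorem boundedness_key {σ : Type} {ar : σ → ℕ} {δ : Type} {dar : δ → ℕ}
    (DI : DepFam δ dar) (hup : UpClosed DI) (κ : δ → Cardinal)
    (hκ : ∀ d : δ, BoundedBy (dar d) (DI d) (κ d))
    {M : Type} (RI : ∀ r : σ, Set (Fin (ar r) → M))
    (φ : TForm σ ar δ dar) :
    ∀ X : Team M, tsat RI DI φ X →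
      ∃ Y ⊆ X, Cardinal.mk Y ≤ φ.ht κ ∧
        ∀ Z, Y ⊆ Z → Z ⊆ X → tsat RI DI φ Z := by
  induction φ with
  | rel r ts =>
    intro X h
    exact ⟨∅, Set.empty_subset _, by simp [TForm.ht], fun Z _ hZX s hs => h s (hZX hs)⟩
  | nrel r ts =>
    intro X h
    exact ⟨∅, Set.empty_subset _, by simp [TForm.ht], fun Z _ hZX s hs => h s (hZX hs)⟩
  | eq k x y =>
    intro X h
    exact ⟨∅, Set.empty_subset _, by simp [TForm.ht], fun Z _ hZX s hs => h s (hZX hs)⟩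
  | neq k x y =>
    intro X h
    exact ⟨∅, Set.empty_subset _, by simp [TForm.ht], fun Z _ hZX s hs => h s (hZX hs)⟩
  | dep d xs =>
    intro X h
    obtain ⟨Y, hYX, hcard, hDY⟩ := hκ d M X xs h
    exact ⟨Y, hYX, hcard, fun Z hYZ _ =>
      hup d M (Y.rel xs) (Z.rel xs) (Team.rel_mono hYZ xs) hDY⟩
  | and φ ψ ihφ ihψ =>
    intro X h
    obtain ⟨h1, h2⟩ := h
    obtain ⟨Y₁, hY₁, hc₁, hZ₁⟩ := ihφ X h1
    obtain ⟨Y₂, hY₂, hc₂, hZ₂⟩ := ihψ X h2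
    refine ⟨Y₁ ∪ Y₂, Set.union_subset hY₁ hY₂,
      (Cardinal.mk_union_le _ _).trans (add_le_add hc₁ hc₂), fun Z hYZ hZX => ?_⟩
    exact ⟨hZ₁ Z (Set.subset_union_left.trans hYZ) hZX,
           hZ₂ Z (Set.subset_union_right.trans hYZ) hZX⟩
  | or φ ψ ihφ ihψ =>
    intro X h
    obtain ⟨X₁, X₂, hX, h1, h2⟩ := h
    obtain ⟨Y₁, hY₁, hc₁, hZ₁⟩ := ihφ X₁ h1
    obtain ⟨Y₂, hY₂, hc₂, hZ₂⟩ := ihψ X₂ h2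
    refine ⟨Y₁ ∪ Y₂, by rw [hX]; exact Set.union_subset_union hY₁ hY₂,
      (Cardinal.mk_union_le _ _).trans (add_le_add hc₁ hc₂), fun Z hYZ hZX => ?_⟩
    refine ⟨Z ∩ X₁ ∪ Y₁, Z ∩ X₂ ∪ Y₂, ?_, ?_, ?_⟩
    · apply Set.Subset.antisymm
      · intro s hs
        rcases (hX ▸ hZX) hs with h' | h'
        · exact Or.inl (Or.inl ⟨hs, h'⟩)
        · exact Or.inr (Or.inl ⟨hs, h'⟩)
      · intro s hs
        rcases hs with (⟨h', _⟩ | h') | (⟨h', _⟩ | h')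
        · exact h'
        · exact hYZ (Or.inl h')
        · exact h'
        · exact hYZ (Or.inr h')
    · exact hZ₁ _ Set.subset_union_right
        (Set.union_subset Set.inter_subset_right hY₁)
    · exact hZ₂ _ Set.subset_union_right
        (Set.union_subset Set.inter_subset_right hY₂)
  | ex v φ ih =>
    intro X h
    obtain ⟨H, hne, hφ⟩ := h
    obtain ⟨Y', hY'sub, hcard, hZ'⟩ := ih _ hφ
    classical
    have hch : ∀ p : Y', ∃ s ∈ X, ∃ m ∈ H s, (p : ℕ → M) = Function.update s v m :=
      fun p => hY'sub p.2
    choose f hfX m hm hupd using hch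
    refine ⟨Set.range f, Set.range_subset_iff.2 hfX,
      Cardinal.mk_range_le.trans hcard, fun Z hYZ hZX => ?_⟩
    refine ⟨H, fun s hs => hne s (hZX hs), ?_⟩
    apply hZ'
    · intro s' hs'
      exact ⟨f ⟨s', hs'⟩, hYZ ⟨⟨s', hs'⟩, rfl⟩, m ⟨s', hs'⟩, hm ⟨s', hs'⟩, hupd ⟨s', hs'⟩⟩
    · rintro s' ⟨s, hs, mm, hmm, rfl⟩
      exact ⟨s, hZX hs, mm, hmm, rfl⟩
  | all v φ ih =>
    intro X h
    obtain ⟨Y', hY'sub, hcard, hZ'⟩ := ih _ h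
    classical
    have hch : ∀ p : Y', ∃ s ∈ X, ∃ m : M, (p : ℕ → M) = Function.update s v m :=
      fun p => hY'sub p.2
    choose f hfX m hupd using hch
    refine ⟨Set.range f, Set.range_subset_iff.2 hfX,
      Cardinal.mk_range_le.trans hcard, fun Z hYZ hZX => ?_⟩
    apply hZ'
    · intro s' hs'
      exact ⟨f ⟨s', hs'⟩, hYZ ⟨⟨s', hs'⟩, rfl⟩, m ⟨s', hs'⟩, hupd ⟨s', hs'⟩⟩
    · rintro s' ⟨s, hs, mm, rfl⟩
      exact ⟨s, hZX hs, mm, rfl⟩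

/-- **Boundedness preservation.**  If every dependency in `D` is upwards closed
and `κ d` is the least cardinal bounding it, then every team satisfying an
`FO(D)`-formula `φ` has a subteam of cardinality at most `ht(φ)` satisfying `φ`. -/
theorem boundedness {σ : Type} {ar : σ → ℕ} {δ : Type} {dar : δ → ℕ}
    (DI : DepFam δ dar) (hup : UpClosed DI) (κ : δ → Cardinal)
    (hκ : ∀ d : δ, IsLeast {c : Cardinal | BoundedBy (dar d) (DI d) c} (κ d))
    {M : Type} (RI : ∀ r : σ, Set (Fin (ar r) → M))
    (φ : TForm σ ar δ dar) (X : Team M) (h : tsat RI DI φ X) :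
    ∃ Y ⊆ X, Cardinal.mk Y ≤ φ.ht κ ∧ tsat RI DI φ Y := by
  obtain ⟨Y, hYX, hc, hZ⟩ :=
    boundedness_key DI hup κ (fun d => (hκ d).1) RI φ X h
  exact ⟨Y, hYX, hc, hZ Y (subset_refl Y) hYX⟩
end
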